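/- Let g be a random variable on (Ω, F, P) with E[exp(r·g)] < ∞ for all r ∈ ℝ, and let U be a utility function with bounded absolute risk aversion: c₁ < -U'(x)/U''(x) < c₂ for all x, with c₁, c₂ > 0. Then for every x ∈ ℝ the equation E[(p - g)·U'(x + p - g)] = 0 has at least one solution p ∈ ℝ. -/

import Mathlib

open MeasureTheory Real

/-- Auxiliary: `z ≤ exp (l*z - 1)` for `z ≥ 0`, `l ≥ 1`. -/
lemma stmt4_aux_le_exp {z l : ℝ} (hz : 0 ≤ z) (hl : 1 ≤ l) : z ≤ exp (l * z - 1) := by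
  calc z ≤ exp (z - 1) := by nlinarith [Real.add_one_le_exp (z-1)]
    _ ≤ exp (l * z - 1) := exp_le_exp.mpr (by nlinarith)

/-- Auxiliary: `z * exp (-(d*z)) ≤ d⁻¹` for `d > 0`. -/
lemma stmt4_aux_zexp {z d : ℝ} (hd : 0 < d) : z * exp (-(d*z)) ≤ d⁻¹ := by
  have h2 : z * d ≤ exp (d*z) := by nlinarith [Real.add_one_le_exp (d*z)]
  calc z * exp (-(d*z)) = (z*d) * exp (-(d*z)) * d⁻¹ := by field_simp
    _ ≤ exp (d*z) * exp (-(d*z)) * d⁻¹ := by gcongr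
    _ = d⁻¹ := by rw [← exp_add]; simp

/-- Exponential bounds on the marginal utility for a utility with bounded
absolute risk aversion. -/
lemma stmt4_derivU_bounds (U : ℝ → ℝ) (c₁ c₂ : ℝ) (hc₁ : 0 < c₁) (hc₂ : 0 < c₂)
    (hU : ContDiff ℝ 2 U) (hU' : ∀ x, 0 < deriv U x)
    (hbound : ∀ x, c₁ < -(deriv U x / deriv (deriv U) x) ∧
      -(deriv U x / deriv (deriv U) x) < c₂) :
    ∀ s t : ℝ, s ≤ t →
      deriv U t ≤ deriv U s * exp (-(c₂⁻¹ * (t - s))) ∧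
      deriv U s * exp (-(c₁⁻¹ * (t - s))) ≤ deriv U t := by
  have hd1 : ContDiff ℝ 1 (deriv U) := by
    have h : ContDiff ℝ ((1:ℕ)+1) U := by exact_mod_cast hU
    exact (contDiff_succ_iff_deriv.mp h).2.2
  have hdd : ∀ t, HasDerivAt (deriv U) (deriv (deriv U) t) t :=
    fun t => ((hd1.differentiable one_ne_zero) t).hasDerivAt
  have hlog : ∀ t, HasDerivAt (fun t => Real.log (deriv U t))
      (deriv (deriv U) t / deriv U t) t := fun t => (hdd t).log (hU' t).ne'
  have hneg : ∀ t, deriv (deriv U) t < 0 := by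
    intro t
    rcases lt_trichotomy (deriv (deriv U) t) 0 with h | h | h
    · exact h
    · exfalso; have := (hbound t).1; rw [h] at this; simp at this; linarith
    · exfalso
      have h1 := (hbound t).1
      have : 0 < deriv U t / deriv (deriv U) t := div_pos (hU' t) h
      linarith
  have hratio : ∀ t, -c₁⁻¹ < deriv (deriv U) t / deriv U t ∧
      deriv (deriv U) t / deriv U t < -c₂⁻¹ := by
    intro t
    set a := deriv U t with ha'
    set b := deriv (deriv U) t with hb'
    have ha : 0 < a := hU' t
    have hb : b < 0 := hneg t
    have h1 : c₁ < -(a/b) := (hbound t).1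
    have h2 : -(a/b) < c₂ := (hbound t).2
    have hnb : 0 < -b := by linarith
    have e1 : -(a/b) = a / (-b) := by rw [div_neg]
    rw [e1] at h1 h2
    have h1' : c₁ * (-b) < a := (lt_div_iff₀ hnb).mp h1
    have h2' : a < c₂ * (-b) := (div_lt_iff₀ hnb).mp h2
    constructor
    · rw [neg_lt, ← neg_div, div_lt_iff₀ ha]
      nlinarith [mul_lt_mul_of_pos_left h1' (inv_pos.mpr hc₁), mul_inv_cancel₀ hc₁.ne']
    · rw [div_lt_iff₀ ha, neg_mul]
      nlinarith [mul_lt_mul_of_pos_left h2' (inv_pos.mpr hc₂), mul_inv_cancel₀ hc₂.ne']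
  intro s t hst
  constructor
  · have hA : StrictAnti (fun t => Real.log (deriv U t) + c₂⁻¹ * t) := by
      apply strictAnti_of_hasDerivAt_neg
        (f' := fun t => deriv (deriv U) t / deriv U t + c₂⁻¹)
      · intro t
        simpa using (hlog t).fun_add ((hasDerivAt_id t).const_mul c₂⁻¹)
      · intro t; have := (hratio t).2; linarith
    rcases eq_or_lt_of_le hst with rfl | h
    · simp [le_of_eq, (exp_pos _).le]
    · have := (hA h).le
      have h2 : Real.log (deriv U t) ≤ Real.log (deriv U s) + -(c₂⁻¹ * (t - s)) := by
        dsimp at this; nlinarith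
      calc deriv U t = exp (Real.log (deriv U t)) := (exp_log (hU' t)).symm
        _ ≤ exp (Real.log (deriv U s) + -(c₂⁻¹ * (t - s))) := exp_le_exp.mpr h2
        _ = deriv U s * exp (-(c₂⁻¹ * (t - s))) := by rw [exp_add, exp_log (hU' s)]
  · have hM : StrictMono (fun t => Real.log (deriv U t) + c₁⁻¹ * t) := by
      apply strictMono_of_hasDerivAt_pos
        (f' := fun t => deriv (deriv U) t / deriv U t + c₁⁻¹)
      · intro t
        simpa using (hlog t).fun_add ((hasDerivAt_id t).const_mul c₁⁻¹)
      · intro t; have := (hratio t).1; linarith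
    rcases eq_or_lt_of_le hst with rfl | h
    · simp [(exp_pos _).le]
    · have := (hM h).le
      have h2 : Real.log (deriv U s) + -(c₁⁻¹ * (t - s)) ≤ Real.log (deriv U t) := by
        dsimp at this; nlinarith
      calc deriv U s * exp (-(c₁⁻¹ * (t - s)))
          = exp (Real.log (deriv U s) + -(c₁⁻¹ * (t - s))) := by rw [exp_add, exp_log (hU' s)]
        _ ≤ exp (Real.log (deriv U t)) := exp_le_exp.mpr h2
        _ = deriv U t := exp_log (hU' t)

set_option maxHeartbeats 1000000 in
/-- existence of a solution `p` of `E[(p - g)·U'(x + p - g)] = 0`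
for a utility with bounded absolute risk aversion and a claim `g` with all
exponential moments. -/
theorem stmt4 {Ω : Type*} [MeasurableSpace Ω] (P : Measure Ω) [IsProbabilityMeasure P]
    (U : ℝ → ℝ) (c₁ c₂ : ℝ) (hc₁ : 0 < c₁) (hc₂ : 0 < c₂)
    (hU : ContDiff ℝ 2 U) (hmono : StrictMono U)
    (hconc : StrictConcaveOn ℝ Set.univ U)
    (hU' : ∀ x, 0 < deriv U x)
    (hbound : ∀ x, c₁ < -(deriv U x / deriv (deriv U) x) ∧
      -(deriv U x / deriv (deriv U) x) < c₂)
    (g : Ω → ℝ) (hgm : Measurable g)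
    (hexp : ∀ r : ℝ, Integrable (fun ω => exp (r * g ω)) P) :
    ∀ x : ℝ, ∃ p : ℝ, ∫ ω, (p - g ω) * deriv U (x + p - g ω) ∂P = 0 := by
  intro x
  have key := stmt4_derivU_bounds U c₁ c₂ hc₁ hc₂ hU hU' hbound
  set d₁ := c₁⁻¹ with hd₁def
  set d₂ := c₂⁻¹ with hd₂def
  have hd₁ : 0 < d₁ := inv_pos.mpr hc₁
  have hd₂ : 0 < d₂ := inv_pos.mpr hc₂
  have hc12 : c₁ < c₂ := lt_trans (hbound 0).1 (hbound 0).2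
  have hd21 : d₂ ≤ d₁ := by
    rw [hd₁def, hd₂def]
    exact (inv_le_inv₀ hc₂ hc₁).mpr hc12.le
  set u0 := deriv U 0 with hu0def
  have hu0 : 0 < u0 := hU' 0
  -- global exponential bounds on deriv U
  have hUB : ∀ t, deriv U t ≤ u0 * (exp (-(d₁*t)) + exp (-(d₂*t))) := by
    intro t
    rcases le_total 0 t with h | h
    · have h1 := (key 0 t h).1
      simp only [sub_zero] at h1
      nlinarith [exp_pos (-(d₁*t))]
    · have h1 := (key t 0 h).2
      have e : exp (-(d₁*(0 - t))) * exp (-(d₁*t)) = 1 := by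
        rw [← exp_add]
        norm_num
      have h3 : deriv U t ≤ u0 * exp (-(d₁*t)) := by
        have h4 := mul_le_mul_of_nonneg_right h1 (exp_pos (-(d₁*t))).le
        calc deriv U t = deriv U t * (exp (-(d₁*(0-t))) * exp (-(d₁*t))) := by
              rw [e, mul_one]
          _ = deriv U t * exp (-(d₁*(0-t))) * exp (-(d₁*t)) := by ring
          _ ≤ u0 * exp (-(d₁*t)) := by rw [hu0def]; exact h4
      nlinarith [exp_pos (-(d₂*t)), hu0]
  have hLB2 : ∀ t, 0 ≤ t → u0 * exp (-(d₁*t)) ≤ deriv U t := by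
    intro t h
    have h1 := (key 0 t h).2
    simpa using h1
  have hLB1 : ∀ t, t ≤ 0 → u0 * exp (-(d₂*t)) ≤ deriv U t := by
    intro t h
    have h1 := (key t 0 h).1
    have e : exp (-(d₂*(0 - t))) * exp (-(d₂*t)) = 1 := by
      rw [← exp_add]; norm_num
    have h4 := mul_le_mul_of_nonneg_right h1 (exp_pos (-(d₂*t))).le
    calc u0 * exp (-(d₂*t)) ≤ deriv U t * exp (-(d₂*(0-t))) * exp (-(d₂*t)) := by
          rw [hu0def]; exact h4
      _ = deriv U t * (exp (-(d₂*(0-t))) * exp (-(d₂*t))) := by ring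
      _ = deriv U t := by rw [e, mul_one]
  -- the auxiliary functions
  set lam := 1 + d₁ with hlamdef
  have hlam1 : 1 ≤ lam := by linarith
  set m : ℝ → ℝ := fun y => min (exp (d₁*(y-x))) (exp (d₂*(y-x))) with hmdef
  have hmpos : ∀ y, 0 < m y := fun y => lt_min (exp_pos _) (exp_pos _)
  set L : ℝ → ℝ := fun y => u0 * m y with hLdef
  have hLpos : ∀ y, 0 < L y := fun y => mul_pos hu0 (hmpos y)
  set B : ℝ → ℝ := fun y =>
      u0 * exp (lam-1) * exp (-(d₁*x)) * exp ((lam+d₁)*y)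
      + u0 * exp (lam-1) * exp (-(d₂*x)) * exp ((lam+d₂)*y)
      + u0 * exp (1-d₁*x) * exp (lam*y) with hBdef
  have hBnn : ∀ y, 0 ≤ B y := fun y => by rw [hBdef]; positivity
  set Cc : ℝ := u0 * c₁ * exp (-(d₁*x)) + u0 * c₂ * exp (-(d₂*x))
      + u0 * exp (-(d₂*x)) * exp d₂ with hCdef
  have hCnn : 0 ≤ Cc := by rw [hCdef]; positivity
  -- lower bound on deriv U (x + p - y) in terms of m
  have hS : ∀ p : ℝ, 0 ≤ p → ∀ y, u0 * (exp (-(d₁*p)) * m y) ≤ deriv U (x + p - y) := by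
    intro p hp y
    rcases le_total 0 (x + p - y) with ht | ht
    · calc u0 * (exp (-(d₁*p)) * m y)
          ≤ u0 * (exp (-(d₁*p)) * exp (d₁*(y-x))) := by
            gcongr
            exact min_le_left _ _
        _ = u0 * exp (-(d₁*(x+p-y))) := by rw [← exp_add]; congr 1; congr 1; ring
        _ ≤ deriv U (x+p-y) := hLB2 _ ht
    · calc u0 * (exp (-(d₁*p)) * m y)
          ≤ u0 * (exp (-(d₂*p)) * exp (d₂*(y-x))) := by
            have e1 : exp (-(d₁*p)) ≤ exp (-(d₂*p)) := by
              apply exp_le_exp.mpr; nlinarith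
            have e2 : m y ≤ exp (d₂*(y-x)) := min_le_right _ _
            have := mul_le_mul e1 e2 (hmpos y).le (exp_pos _).le
            nlinarith
        _ = u0 * exp (-(d₂*(x+p-y))) := by rw [← exp_add]; congr 1; congr 1; ring
        _ ≤ deriv U (x+p-y) := hLB1 _ ht
  have hS' : ∀ p : ℝ, p ≤ 0 → ∀ y, u0 * (exp (-(d₂*p)) * m y) ≤ deriv U (x + p - y) := by
    intro p hp y
    rcases le_total 0 (x + p - y) with ht | ht
    · calc u0 * (exp (-(d₂*p)) * m y)
          ≤ u0 * (exp (-(d₁*p)) * exp (d₁*(y-x))) := by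
            have e1 : exp (-(d₂*p)) ≤ exp (-(d₁*p)) := by
              apply exp_le_exp.mpr; nlinarith
            have e2 : m y ≤ exp (d₁*(y-x)) := min_le_left _ _
            have := mul_le_mul e1 e2 (hmpos y).le (exp_pos _).le
            nlinarith
        _ = u0 * exp (-(d₁*(x+p-y))) := by rw [← exp_add]; congr 1; congr 1; ring
        _ ≤ deriv U (x+p-y) := hLB2 _ ht
    · calc u0 * (exp (-(d₂*p)) * m y)
          ≤ u0 * (exp (-(d₂*p)) * exp (d₂*(y-x))) := by
            gcongr
            exact min_le_right _ _
        _ = u0 * exp (-(d₂*(x+p-y))) := by rw [← exp_add]; congr 1; congr 1; ring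
        _ ≤ deriv U (x+p-y) := hLB1 _ ht
  -- key pointwise inequality for p ≥ 0
  have hKeyPos : ∀ p : ℝ, 0 ≤ p → ∀ y : ℝ,
      exp (-(d₁*p)) * L y - exp (-(lam*p)) * B y ≤ (p - y) * deriv U (x + p - y) := by
    intro p hp y
    rcases le_or_gt y (p-1) with hy | hy
    · have h1 : exp (-(d₁*p)) * L y ≤ deriv U (x+p-y) := by
        have h0 := hS p hp y
        calc exp (-(d₁*p)) * L y = u0 * (exp (-(d₁*p)) * m y) := by
              simp only [hLdef]; ring
          _ ≤ deriv U (x+p-y) := h0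
      have h2 : deriv U (x+p-y) ≤ (p-y) * deriv U (x+p-y) := by
        nlinarith [mul_nonneg (show (0:ℝ) ≤ p - y - 1 by linarith) (hU' (x+p-y)).le]
      have h3 : 0 ≤ exp (-(lam*p)) * B y := mul_nonneg (exp_pos _).le (hBnn y)
      linarith
    · have hu : (0:ℝ) ≤ 1 + (y - p) := by linarith
      have hT : ∀ d : ℝ, 0 < d →
          (1+(y-p)) * exp (-(d*(x+p-y))) ≤
            exp (lam-1) * exp (-(d*x)) * exp ((lam+d)*y) * exp (-(lam*p)) := by
        intro d hd
        calc (1+(y-p)) * exp (-(d*(x+p-y)))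
            ≤ exp (lam*(1+(y-p))-1) * exp (-(d*(x+p-y))) :=
              mul_le_mul_of_nonneg_right (stmt4_aux_le_exp hu hlam1) (exp_pos _).le
          _ = exp (lam*(1+(y-p))-1 + -(d*(x+p-y))) := (exp_add _ _).symm
          _ ≤ exp ((lam-1) + -(d*x) + (lam+d)*y + -(lam*p)) := by
              apply exp_le_exp.mpr
              nlinarith [mul_nonneg hd.le hp]
          _ = exp (lam-1) * exp (-(d*x)) * exp ((lam+d)*y) * exp (-(lam*p)) := by
              rw [exp_add, exp_add, exp_add]
      have hT1 := hT d₁ hd₁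
      have hT2 := hT d₂ hd₂
      have hT3 : exp (-(d₁*p)) * L y ≤ u0 * exp (1-d₁*x) * exp (lam*y) * exp (-(lam*p)) := by
        have e1 : L y ≤ u0 * exp (d₁*(y-x)) := by
          simp only [hLdef, hmdef]
          exact mul_le_mul_of_nonneg_left (min_le_left _ _) hu0.le
        calc exp (-(d₁*p)) * L y ≤ exp (-(d₁*p)) * (u0 * exp (d₁*(y-x))) :=
              mul_le_mul_of_nonneg_left e1 (exp_pos _).le
          _ = u0 * exp (-(d₁*p) + d₁*(y-x)) := by rw [exp_add]; ring
          _ ≤ u0 * exp ((1-d₁*x) + lam*y + -(lam*p)) := by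
              have he : (-(d₁*p) + d₁*(y-x)) ≤ ((1-d₁*x) + lam*y + -(lam*p)) := by
                nlinarith [hu, hlamdef]
              exact mul_le_mul_of_nonneg_left (exp_le_exp.mpr he) hu0.le
          _ = u0 * exp (1-d₁*x) * exp (lam*y) * exp (-(lam*p)) := by
              rw [exp_add, exp_add]; ring
      have hUBt := hUB (x+p-y)
      have hstep : (1+(y-p)) * deriv U (x+p-y) + exp (-(d₁*p)) * L y
          ≤ exp (-(lam*p)) * B y := by
        have h4 := mul_le_mul_of_nonneg_left hUBt hu
        simp only [hBdef]
        nlinarith [mul_le_mul_of_nonneg_left hT1 hu0.le,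
          mul_le_mul_of_nonneg_left hT2 hu0.le]
      have h5 : -(1+(y-p)) * deriv U (x+p-y) ≤ (p-y) * deriv U (x+p-y) :=
        mul_le_mul_of_nonneg_right (by linarith) (hU' _).le
      linarith
  -- key pointwise inequality for p ≤ 0
  have hKeyNeg : ∀ p : ℝ, p ≤ 0 → ∀ y : ℝ,
      (p - y) * deriv U (x + p - y) ≤ Cc - exp (-(d₂*p)) * L y := by
    intro p hp y
    rcases le_or_gt (p+1) y with hy | hy
    · have h1 : exp (-(d₂*p)) * L y ≤ deriv U (x+p-y) := by
        have h0 := hS' p hp y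
        calc exp (-(d₂*p)) * L y = u0 * (exp (-(d₂*p)) * m y) := by
              simp only [hLdef]; ring
          _ ≤ deriv U (x+p-y) := h0
      have h2 : (p-y) * deriv U (x+p-y) ≤ -deriv U (x+p-y) := by
        nlinarith [mul_nonneg (show (0:ℝ) ≤ y - p - 1 by linarith) (hU' (x+p-y)).le]
      linarith
    · have hv : (-1:ℝ) < p - y := by linarith
      have hF : (p-y) * deriv U (x+p-y)
          ≤ u0 * c₁ * exp (-(d₁*x)) + u0 * c₂ * exp (-(d₂*x)) := by
        rcases le_or_gt (p-y) 0 with h0 | h0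
        · have hneg : (p-y) * deriv U (x+p-y) ≤ 0 :=
            mul_nonpos_of_nonpos_of_nonneg h0 (hU' _).le
          nlinarith [mul_pos (mul_pos hu0 hc₁) (exp_pos (-(d₁*x))),
            mul_pos (mul_pos hu0 hc₂) (exp_pos (-(d₂*x)))]
        · have h4 := mul_le_mul_of_nonneg_left (hUB (x+p-y)) h0.le
          have hz : ∀ d : ℝ, 0 < d →
              (p-y) * exp (-(d*(x+p-y))) ≤ d⁻¹ * exp (-(d*x)) := by
            intro d hd
            have e1 : exp (-(d*(x+p-y))) = exp (-(d*x)) * exp (-(d*(p-y))) := by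
              rw [← exp_add]; congr 1; ring
            rw [e1]
            have h5 := stmt4_aux_zexp (z := p-y) hd
            calc (p-y) * (exp (-(d*x)) * exp (-(d*(p-y))))
                = ((p-y) * exp (-(d*(p-y)))) * exp (-(d*x)) := by ring
              _ ≤ d⁻¹ * exp (-(d*x)) :=
                  mul_le_mul_of_nonneg_right h5 (exp_pos _).le
          have hz1 := hz d₁ hd₁
          have hz2 := hz d₂ hd₂
          have hc1 : d₁⁻¹ = c₁ := by rw [hd₁def, inv_inv]
          have hc2 : d₂⁻¹ = c₂ := by rw [hd₂def, inv_inv]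
          rw [hc1] at hz1; rw [hc2] at hz2
          nlinarith [mul_le_mul_of_nonneg_left hz1 hu0.le,
            mul_le_mul_of_nonneg_left hz2 hu0.le]
      have habs : exp (-(d₂*p)) * L y ≤ u0 * exp (-(d₂*x)) * exp d₂ := by
        have e1 : L y ≤ u0 * exp (d₂*(y-x)) := by
          simp only [hLdef, hmdef]
          exact mul_le_mul_of_nonneg_left (min_le_right _ _) hu0.le
        calc exp (-(d₂*p)) * L y ≤ exp (-(d₂*p)) * (u0 * exp (d₂*(y-x))) :=
              mul_le_mul_of_nonneg_left e1 (exp_pos _).le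
          _ = u0 * exp (-(d₂*p) + d₂*(y-x)) := by rw [exp_add]; ring
          _ ≤ u0 * exp (-(d₂*x) + d₂) := by
              have he : -(d₂*p) + d₂*(y-x) ≤ -(d₂*x) + d₂ := by
                nlinarith [mul_nonneg hd₂.le (show (0:ℝ) ≤ 1 - (y - p) by linarith)]
              exact mul_le_mul_of_nonneg_left (exp_le_exp.mpr he) hu0.le
          _ = u0 * exp (-(d₂*x)) * exp d₂ := by rw [exp_add]; ring
      simp only [hCdef]
      linarith
  -- measurability and integrability
  have hcU : Continuous (deriv U) := by
    have h : ContDiff ℝ ((1:ℕ)+1) U := by exact_mod_cast hU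
    exact (contDiff_succ_iff_deriv.mp h).2.2.continuous
  have hmeas : ∀ p : ℝ, AEStronglyMeasurable (fun ω => (p - g ω) * deriv U (x + p - g ω)) P := by
    intro p
    exact ((measurable_const.sub hgm).mul
      (hcU.measurable.comp (measurable_const.sub hgm))).aestronglyMeasurable
  have hBnd : ∀ p₀ : ℝ, ∃ Bd : Ω → ℝ, Integrable Bd P ∧ (∀ ω, 0 ≤ Bd ω) ∧
      ∀ p ∈ Set.Icc (p₀-1) (p₀+1), ∀ ω, |(p - g ω) * deriv U (x + p - g ω)| ≤ Bd ω := by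
    intro p₀
    refine ⟨fun ω => (u0 * exp ((|x|+|p₀|+1)*(1+d₁+d₂))) *
        (exp ((d₁-1) * g ω) + exp ((d₁+1) * g ω)
        + exp ((d₂-1) * g ω) + exp ((d₂+1) * g ω)), ?_, ?_, ?_⟩
    · exact ((((hexp (d₁-1)).add (hexp (d₁+1))).add (hexp (d₂-1))).add
        (hexp (d₂+1))).const_mul _
    · intro ω
      have := hu0.le
      positivity
    · rintro p ⟨hp1, hp2⟩ ω
      set y := g ω with hydef
      have hpabs : |p| ≤ |p₀| + 1 := by
        rw [abs_le]
        constructor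
        · nlinarith [neg_abs_le p₀]
        · nlinarith [le_abs_self p₀]
      have h1 : |p - y| ≤ exp (p-y) + exp (y-p) := by
        rw [abs_le]
        constructor
        · nlinarith [Real.add_one_le_exp (y-p), exp_pos (p-y)]
        · nlinarith [Real.add_one_le_exp (p-y), exp_pos (y-p)]
      have h2 : |(p - y) * deriv U (x + p - y)| ≤
          (exp (p-y) + exp (y-p)) * (u0 * (exp (-(d₁*(x+p-y))) + exp (-(d₂*(x+p-y))))) := by
        rw [abs_mul, abs_of_nonneg (hU' _).le]
        exact mul_le_mul h1 (hUB _) (hU' _).le (by positivity)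
      have key4 : ∀ ε : ℝ, ε = 1 ∨ ε = -1 → ∀ d : ℝ, 0 < d → d ≤ d₁+d₂ →
          exp (ε*(p-y)) * exp (-(d*(x+p-y))) ≤
            exp ((|x|+|p₀|+1)*(1+d₁+d₂)) * exp ((d-ε)*y) := by
        intro ε hε d hd hdle
        rw [← exp_add, ← exp_add]
        apply exp_le_exp.mpr
        have hdx : -(d*x) ≤ d*|x| := by
          nlinarith [mul_le_mul_of_nonneg_left (neg_abs_le x) hd.le]
        have hdp : -(d*p) ≤ d*(|p₀|+1) := by
          nlinarith [mul_le_mul_of_nonneg_left hpabs hd.le,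
            mul_le_mul_of_nonneg_left (neg_abs_le p) hd.le]
        have hdd : d*(|x|+|p₀|+1) ≤ (d₁+d₂)*(|x|+|p₀|+1) :=
          mul_le_mul_of_nonneg_right hdle (by positivity)
        rcases hε with rfl | rfl
        · nlinarith [abs_nonneg x, abs_nonneg p₀, le_abs_self p, neg_abs_le p, hdx, hdp, hdd, hpabs]
        · nlinarith [abs_nonneg x, abs_nonneg p₀, le_abs_self p, neg_abs_le p, hdx, hdp, hdd, hpabs]
      have k1 := key4 1 (Or.inl rfl) d₁ hd₁ (by linarith)
      have k2 := key4 (-1) (Or.inr rfl) d₁ hd₁ (by linarith)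
      have k3 := key4 1 (Or.inl rfl) d₂ hd₂ (by linarith)
      have k4 := key4 (-1) (Or.inr rfl) d₂ hd₂ (by linarith)
      rw [show (1:ℝ)*(p-y) = p-y by ring] at k1 k3
      rw [show (-1:ℝ)*(p-y) = y-p by ring] at k2 k4
      rw [show d₁-(-1:ℝ) = d₁+1 by ring] at k2
      rw [show d₂-(-1:ℝ) = d₂+1 by ring] at k4
      calc |(p - y) * deriv U (x + p - y)| ≤
          (exp (p-y) + exp (y-p)) * (u0 * (exp (-(d₁*(x+p-y))) + exp (-(d₂*(x+p-y))))) := h2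
        _ ≤ (u0 * exp ((|x|+|p₀|+1)*(1+d₁+d₂))) *
            (exp ((d₁-1) * y) + exp ((d₁+1) * y) + exp ((d₂-1) * y) + exp ((d₂+1) * y)) := by
            nlinarith [mul_le_mul_of_nonneg_left k1 hu0.le,
              mul_le_mul_of_nonneg_left k2 hu0.le,
              mul_le_mul_of_nonneg_left k3 hu0.le,
              mul_le_mul_of_nonneg_left k4 hu0.le,
              exp_pos (p-y), exp_pos (y-p), hu0.le]
  have hInt : ∀ p : ℝ, Integrable (fun ω => (p - g ω) * deriv U (x + p - g ω)) P := by
    intro p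
    obtain ⟨Bd, hBi, hB0, hBle⟩ := hBnd p
    exact hBi.mono (hmeas p) (ae_of_all _ fun ω => by
      rw [Real.norm_eq_abs, Real.norm_eq_abs, abs_of_nonneg (hB0 ω)]
      exact hBle p ⟨by linarith, by linarith⟩ ω)
  have hLint : Integrable (fun ω => L (g ω)) P := by
    have hb : Integrable (fun ω => (u0 * exp (-(d₁*x))) * exp (d₁ * g ω)) P :=
      (hexp d₁).const_mul _
    apply hb.mono
    · apply Measurable.aestronglyMeasurable
      have : Continuous L := by
        rw [hLdef]
        exact continuous_const.mul (Continuous.min (by fun_prop) (by fun_prop))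
      exact this.measurable.comp hgm
    · refine ae_of_all _ fun ω => ?_
      rw [Real.norm_eq_abs, Real.norm_eq_abs, abs_of_nonneg (hLpos (g ω)).le,
        abs_of_nonneg (by positivity)]
      calc L (g ω) ≤ u0 * exp (d₁*(g ω - x)) := by
            simp only [hLdef, hmdef]
            exact mul_le_mul_of_nonneg_left (min_le_left _ _) hu0.le
        _ = (u0 * exp (-(d₁*x))) * exp (d₁ * g ω) := by
            rw [mul_assoc, ← exp_add]; congr 2; ring
  have hBint : Integrable (fun ω => B (g ω)) P := by
    simp only [hBdef]
    exact (((hexp (lam+d₁)).const_mul _).add ((hexp (lam+d₂)).const_mul _)).add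
      ((hexp lam).const_mul _)
  -- positivity of ∫ L ∘ g
  set EL := ∫ ω, L (g ω) ∂P with hELdef
  set EB := ∫ ω, B (g ω) ∂P with hEBdef
  have hELpos : 0 < EL := by
    rw [hELdef, integral_pos_iff_support_of_nonneg_ae
      (ae_of_all _ fun ω => (hLpos (g ω)).le) hLint]
    have : Function.support (fun ω => L (g ω)) = Set.univ :=
      Set.eq_univ_of_forall fun ω => (hLpos (g ω)).ne'
    rw [this]
    simp
  have hEBnn : 0 ≤ EB := integral_nonneg fun ω => hBnn (g ω)
  clear_value d₁ d₂ u0 lam m L B Cc EL EB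
  -- integrated bounds
  have hIntPos : ∀ p : ℝ, 0 ≤ p →
      exp (-(d₁*p)) * EL - exp (-(lam*p)) * EB ≤
        ∫ ω, (p - g ω) * deriv U (x + p - g ω) ∂P := by
    intro p hp
    have h1 : Integrable (fun ω => exp (-(d₁*p)) * L (g ω) - exp (-(lam*p)) * B (g ω)) P :=
      (hLint.const_mul _).sub (hBint.const_mul _)
    have h2 := integral_mono h1 (hInt p) (fun ω => hKeyPos p hp (g ω))
    rw [integral_sub (hLint.const_mul _) (hBint.const_mul _),
      integral_const_mul, integral_const_mul] at h2
    rw [hELdef, hEBdef]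
    exact h2
  have hIntNeg : ∀ p : ℝ, p ≤ 0 →
      (∫ ω, (p - g ω) * deriv U (x + p - g ω) ∂P) ≤ Cc - exp (-(d₂*p)) * EL := by
    intro p hp
    have h1 : Integrable (fun ω => Cc - exp (-(d₂*p)) * L (g ω)) P :=
      (integrable_const _).sub (hLint.const_mul _)
    have h2 := integral_mono (hInt p) h1 (fun ω => hKeyNeg p hp (g ω))
    rw [integral_sub (integrable_const _) (hLint.const_mul _),
      integral_const_mul, integral_const] at h2
    rw [hELdef]
    simpa using h2
  -- continuity of the integral in p
  have hcont : Continuous (fun p => ∫ ω, (p - g ω) * deriv U (x + p - g ω) ∂P) := by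
    rw [continuous_iff_continuousAt]
    intro p₀
    obtain ⟨Bd, hBi, hB0, hBle⟩ := hBnd p₀
    apply continuousAt_of_dominated (bound := Bd)
    · exact Filter.Eventually.of_forall hmeas
    · apply Filter.eventually_of_mem (Icc_mem_nhds (show p₀ - 1 < p₀ by linarith) (show p₀ < p₀ + 1 by linarith))
      intro p hp
      exact ae_of_all _ fun ω => by
        rw [Real.norm_eq_abs]; exact hBle p hp ω
    · exact hBi
    · exact ae_of_all _ fun ω => by
        apply Continuous.continuousAt
        exact (continuous_id.sub continuous_const).mul
          (hcU.comp ((continuous_const.add continuous_id).sub continuous_const))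
  -- choose the endpoints
  set pp := max 0 (Real.log ((EB+1)/EL)) with hppdef
  set pm := min 0 (-(c₂ * Real.log ((Cc+1)/EL))) with hpmdef
  have hpp0 : 0 ≤ pp := le_max_left _ _
  have hpm0 : pm ≤ 0 := min_le_left _ _
  have hpplog : Real.log ((EB+1)/EL) ≤ pp := le_max_right _ _
  have hpmlog : pm ≤ -(c₂ * Real.log ((Cc+1)/EL)) := min_le_right _ _
  clear_value pp pm
  have hpos : 0 < ∫ ω, (pp - g ω) * deriv U (x + pp - g ω) ∂P := by
    have h1 := hIntPos pp hpp0
    have h2 : exp (-pp) * EB < EL := by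
      have he : exp (-pp) ≤ EL / (EB+1) := by
        have : Real.log ((EB+1)/EL) ≤ pp := hpplog
        calc exp (-pp) ≤ exp (-(Real.log ((EB+1)/EL))) := exp_le_exp.mpr (by linarith)
          _ = EL / (EB+1) := by
              rw [exp_neg, exp_log (by positivity)]
              rw [inv_div]
        
      calc exp (-pp) * EB ≤ (EL / (EB+1)) * EB := by
            apply mul_le_mul_of_nonneg_right he hEBnn
        _ < EL := by
            rw [div_mul_eq_mul_div, div_lt_iff₀ (by linarith)]
            nlinarith
    have h3 : exp (-(lam*pp)) = exp (-(d₁*pp)) * exp (-pp) := by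
      rw [← exp_add]; congr 1; rw [hlamdef]; ring
    rw [h3] at h1
    have h5 := mul_lt_mul_of_pos_left h2 (exp_pos (-(d₁*pp)))
    have h6 : exp (-(d₁*pp)) * (exp (-pp) * EB) = exp (-(d₁*pp)) * exp (-pp) * EB := by ring
    rw [h6] at h5
    linarith
  have hneg : (∫ ω, (pm - g ω) * deriv U (x + pm - g ω) ∂P) < 0 := by
    have h1 := hIntNeg pm hpm0
    have h2 : Cc + 1 ≤ exp (-(d₂*pm)) * EL := by
      have he : (Cc+1)/EL ≤ exp (-(d₂*pm)) := by
        have hle : pm ≤ -(c₂ * Real.log ((Cc+1)/EL)) := hpmlog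
        have : Real.log ((Cc+1)/EL) ≤ -(d₂*pm) := by
          have hd : d₂ * (c₂ * Real.log ((Cc+1)/EL)) = Real.log ((Cc+1)/EL) := by
            rw [hd₂def, ← mul_assoc, inv_mul_cancel₀ hc₂.ne', one_mul]
          nlinarith [mul_le_mul_of_nonneg_left hle hd₂.le]
        calc (Cc+1)/EL = exp (Real.log ((Cc+1)/EL)) := (exp_log (div_pos (by linarith) hELpos)).symm
          _ ≤ exp (-(d₂*pm)) := exp_le_exp.mpr this
      calc Cc + 1 = ((Cc+1)/EL) * EL := (div_mul_cancel₀ _ hELpos.ne').symm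
        _ ≤ exp (-(d₂*pm)) * EL := mul_le_mul_of_nonneg_right he hELpos.le
    linarith
  -- intermediate value theorem
  have hle : pm ≤ pp := le_trans hpm0 hpp0
  have := intermediate_value_Icc hle hcont.continuousOn
  have h0 : (0:ℝ) ∈ Set.Icc (∫ ω, (pm - g ω) * deriv U (x + pm - g ω) ∂P)
      (∫ ω, (pp - g ω) * deriv U (x + pp - g ω) ∂P) := ⟨hneg.le, hpos.le⟩
  obtain ⟨p, _, hp⟩ := this h0
  exact ⟨p, hp⟩
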